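/- Let V : ℝ^d → ℝ be differentiable with L-Lipschitz gradient, bounded above by V*. Let (θ_t), (v_t) be sequences with θ_{t+1} = θ_t + η v_t, 0 < η ≤ 1/(2L). Suppose ∑_{t=0}^{T-1} ‖v_t - ∇V(θ_t)‖² ≤ (1/2) ∑_{t=0}^{T-1} ‖v_t‖² + S for some S ≥ 0. Then (1/T) ∑_{t=0}^{T-1} ‖∇V(θ_t)‖² ≤ 2(V* - V(θ_0))/(ηT) + S/T. -/

import Mathlib

open scoped RealInnerProductSpace

/-- Quadratic lower bound (descent lemma) for a function with Lipschitz gradient. -/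
lemma quad_lower {d : ℕ} (V : EuclideanSpace ℝ (Fin d) → ℝ) (L : ℝ) (hL : 0 ≤ L)
    (hdiff : Differentiable ℝ V)
    (hlip : LipschitzWith (Real.toNNReal L) (gradient V))
    (x u : EuclideanSpace ℝ (Fin d)) :
    V x + ⟪gradient V x, u⟫ - L / 2 * ‖u‖ ^ 2 ≤ V (x + u) := by
  have hfd : ∀ y : EuclideanSpace ℝ (Fin d), (fderiv ℝ V y) u = ⟪gradient V y, u⟫ := by
    intro y
    simp [gradient, InnerProductSpace.toDual_symm_apply]
  have hlip' : ∀ a b : EuclideanSpace ℝ (Fin d),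
      ‖gradient V a - gradient V b‖ ≤ L * ‖a - b‖ := by
    intro a b
    have := hlip.dist_le_mul a b
    simpa [dist_eq_norm, Real.coe_toNNReal L hL] using this
  set c : ℝ := ⟪gradient V x, u⟫ with hc
  set f : ℝ → ℝ := fun s => V (x + s • u) - V x - s * c with hf
  set f' : ℝ → ℝ := fun s => ⟪gradient V (x + s • u), u⟫ - c with hf'
  have hderiv : ∀ s : ℝ, HasDerivAt f (f' s) s := by
    intro s
    have hcline : HasDerivAt (fun s : ℝ => x + s • u) u s := by
      simpa using ((hasDerivAt_id s).smul_const u).const_add x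
    have hV : HasDerivAt (fun s : ℝ => V (x + s • u)) ((fderiv ℝ V (x + s • u)) u) s :=
      ((hdiff _).hasFDerivAt).comp_hasDerivAt s hcline
    have := (hV.sub_const (V x)).sub (hasDerivAt_mul_const c)
    have e : f = (fun x_1 => V (x + x_1 • u) - V x) - fun x => x * c := rfl
    have e' : f' s = (fderiv ℝ V (x + s • u)) u - c := by rw [hfd]
    rw [e, e']; exact this
  set B : ℝ → ℝ := fun s => L * ‖u‖ ^ 2 / 2 * s ^ 2 with hB
  set B' : ℝ → ℝ := fun s => L * ‖u‖ ^ 2 * s with hB'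
  have hBd : ∀ s : ℝ, HasDerivAt B (B' s) s := by
    intro s
    have := (hasDerivAt_pow 2 s).const_mul (L * ‖u‖ ^ 2 / 2)
    refine this.congr_deriv ?_
    show _ = L * ‖u‖ ^ 2 * s; push_cast; ring
  have bound : ∀ s ∈ Set.Ico (0 : ℝ) 1, ‖f' s‖ ≤ B' s := by
    intro s hs
    have h1 : |(⟪gradient V (x + s • u) - gradient V x, u⟫ : ℝ)|
        ≤ ‖gradient V (x + s • u) - gradient V x‖ * ‖u‖ := abs_real_inner_le_norm _ _
    have h2 : ‖gradient V (x + s • u) - gradient V x‖ ≤ L * (s * ‖u‖) := by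
      have := hlip' (x + s • u) x
      simpa [norm_smul, abs_of_nonneg hs.1] using this
    have h3 : ‖gradient V (x + s • u) - gradient V x‖ * ‖u‖ ≤ L * (s * ‖u‖) * ‖u‖ :=
      mul_le_mul_of_nonneg_right h2 (norm_nonneg u)
    have : |f' s| ≤ L * (s * ‖u‖) * ‖u‖ := by
      calc |f' s| = |(⟪gradient V (x + s • u) - gradient V x, u⟫ : ℝ)| := by
            rw [inner_sub_left]
          _ ≤ ‖gradient V (x + s • u) - gradient V x‖ * ‖u‖ := h1
          _ ≤ L * (s * ‖u‖) * ‖u‖ := h3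
    calc ‖f' s‖ = |f' s| := rfl
      _ ≤ L * (s * ‖u‖) * ‖u‖ := this
      _ = B' s := by simp [hB']; ring
  have hcont : ContinuousOn f (Set.Icc (0 : ℝ) 1) :=
    fun s _ => ((hderiv s).continuousAt).continuousWithinAt
  have ha : ‖f 0‖ ≤ B 0 := by simp [hf, hB]
  have key := image_norm_le_of_norm_deriv_right_le_deriv_boundary hcont
    (fun s _ => (hderiv s).hasDerivWithinAt) ha hBd bound
  have h1 : ‖f 1‖ ≤ B 1 := key (Set.right_mem_Icc.2 zero_le_one)
  have h1' : |V (x + u) - V x - c| ≤ L * ‖u‖ ^ 2 / 2 := by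
    simpa [hf, hB] using h1
  have := abs_le.1 h1'
  linarith [this.1]

theorem stmt_8 {d : ℕ} (V : EuclideanSpace ℝ (Fin d) → ℝ) (L η Vstar S : ℝ)
    (hL : 0 < L) (hdiff : Differentiable ℝ V)
    (hlip : LipschitzWith (Real.toNNReal L) (gradient V))
    (hbd : ∀ θ, V θ ≤ Vstar)
    (hη : 0 < η) (hη2 : η ≤ 1 / (2 * L))
    (θ v : ℕ → EuclideanSpace ℝ (Fin d))
    (hupd : ∀ t, θ (t + 1) = θ t + η • v t)
    (T : ℕ) (hT : 1 ≤ T) (hS : 0 ≤ S)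
    (herr : ∑ t ∈ Finset.range T, ‖v t - gradient V (θ t)‖ ^ 2
        ≤ (1 / 2) * ∑ t ∈ Finset.range T, ‖v t‖ ^ 2 + S) :
    (1 / (T : ℝ)) * ∑ t ∈ Finset.range T, ‖gradient V (θ t)‖ ^ 2
      ≤ 2 * (Vstar - V (θ 0)) / (η * T) + S / T := by
  set g : ℕ → EuclideanSpace ℝ (Fin d) := fun t => gradient V (θ t) with hg
  set A : ℝ := ∑ t ∈ Finset.range T, ‖g t‖ ^ 2 with hA
  set B : ℝ := ∑ t ∈ Finset.range T, ‖v t‖ ^ 2 with hB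
  set C : ℝ := ∑ t ∈ Finset.range T, ‖v t - g t‖ ^ 2 with hC
  -- per-step descent inequality
  have step : ∀ t, η * ⟪g t, v t⟫ - L / 2 * η ^ 2 * ‖v t‖ ^ 2 ≤ V (θ (t + 1)) - V (θ t) := by
    intro t
    have := quad_lower V L hL.le hdiff hlip (θ t) (η • v t)
    rw [← hupd t] at this
    have hin : (⟪gradient V (θ t), η • v t⟫ : ℝ) = η * ⟪g t, v t⟫ := by
      rw [real_inner_smul_right]
    have hnm : ‖η • v t‖ ^ 2 = η ^ 2 * ‖v t‖ ^ 2 := by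
      rw [norm_smul, mul_pow, Real.norm_eq_abs, sq_abs]
    rw [hin, hnm] at this
    nlinarith [this]
  -- polarization identity
  have hinner : ∀ t, (⟪g t, v t⟫ : ℝ) = (‖g t‖ ^ 2 + ‖v t‖ ^ 2 - ‖v t - g t‖ ^ 2) / 2 := by
    intro t
    have h := @norm_sub_sq_real (EuclideanSpace ℝ (Fin d)) _ _ (v t) (g t)
    have hcomm : (⟪v t, g t⟫ : ℝ) = ⟪g t, v t⟫ := real_inner_comm _ _
    linarith [h, hcomm.symm.le, hcomm.le]
  -- telescoping sum
  have hsum : ∑ t ∈ Finset.range T, (η * ⟪g t, v t⟫ - L / 2 * η ^ 2 * ‖v t‖ ^ 2)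
      ≤ V (θ T) - V (θ 0) := by
    rw [← Finset.sum_range_sub (fun t => V (θ t))]
    exact Finset.sum_le_sum fun t _ => step t
  have expand : ∑ t ∈ Finset.range T, (η * ⟪g t, v t⟫ - L / 2 * η ^ 2 * ‖v t‖ ^ 2)
      = η / 2 * A + (η / 2 - L / 2 * η ^ 2) * B - η / 2 * C := by
    simp_rw [hinner]
    rw [hA, hB, hC, Finset.mul_sum, Finset.mul_sum, Finset.mul_sum,
      ← Finset.sum_add_distrib, ← Finset.sum_sub_distrib]
    exact Finset.sum_congr rfl fun t _ => by ring
  have hmain : η / 2 * A + (η / 2 - L / 2 * η ^ 2) * B - η / 2 * C ≤ Vstar - V (θ 0) := by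
    rw [← expand]
    exact hsum.trans (by linarith [hbd (θ T)])
  have hLη : L * η ≤ 1 / 2 := by
    rw [le_div_iff₀ (by positivity : (0:ℝ) < 2 * L)] at hη2
    nlinarith
  have hBnn : 0 ≤ B := Finset.sum_nonneg fun t _ => by positivity
  have hAnn : 0 ≤ A := Finset.sum_nonneg fun t _ => by positivity
  have herr' : C ≤ 1 / 2 * B + S := by simpa [hC, hB, hg] using herr
  -- key scalar inequality
  have hkey : η * A ≤ 2 * (Vstar - V (θ 0)) + η * S := by
    nlinarith [mul_le_mul_of_nonneg_left herr' (by positivity : (0:ℝ) ≤ η / 2),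
      mul_nonneg (mul_nonneg hη.le (by linarith : (0:ℝ) ≤ 1 / 2 - L * η)) hBnn]
  have hTpos : (0:ℝ) < T := by
    have : (1:ℝ) ≤ T := by exact_mod_cast hT
    linarith
  have hrhs : 2 * (Vstar - V (θ 0)) / (η * T) + S / T
      = (2 * (Vstar - V (θ 0)) + η * S) / (η * T) := by
    field_simp
  rw [hrhs, one_div_mul_eq_div, div_le_div_iff₀ hTpos (by positivity)]
  nlinarith [mul_le_mul_of_nonneg_right hkey hTpos.le]
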